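/- Let κ > 0 and α < 1 − κ, and let f(λ) = λ^{−α} on (0,π). Then there exists a constant C = C(α, κ) > 0 such that for all n ∈ ℕ, sup_{h ∈ P_n} ( ∫_0^π λ^{−α−κ} h(λ) dλ / ∫_0^π λ^{−α} h(λ) dλ ) ≤ C n^{κ/(1 − α₊)}, where α₊ = max(α, 0). -/

import Mathlib

open MeasureTheory Real Filter Topology
open scoped ENNReal

noncomputable section

/-- `P_n`: the class of probability densities on `(0, π)` bounded by `n`. -/
def MemPn (n : ℕ) (h : ℝ → ℝ) : Prop :=
  (∀ l ∈ Set.Ioo (0 : ℝ) π, 0 ≤ h l ∧ h l ≤ n) ∧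
    (∫ l in Set.Ioo (0 : ℝ) π, h l) = 1 ∧ IntegrableOn h (Set.Ioo (0 : ℝ) π)

/-- **Lemma C.1, power-law case.** For `κ > 0`, `α < 1 - κ` and `f(λ) = λ^{-α}` on `(0,π)`,
there is `C = C(α,κ) > 0` with
`sup_{h ∈ P_n} ( ∫ λ^{-α-κ} h / ∫ λ^{-α} h ) ≤ C n^{κ/(1-α₊)}` for all `n`. -/
theorem sup_density_quotient_power_law (κ α : ℝ) (hκ : 0 < κ) (hα : α < 1 - κ) :
    ∃ C : ℝ, 0 < C ∧ ∀ n : ℕ, ∀ h ∈ {h : ℝ → ℝ | MemPn n h},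
      (∫⁻ l in Set.Ioo (0 : ℝ) π, ENNReal.ofReal (l ^ (-α - κ) * h l)) /
          (∫⁻ l in Set.Ioo (0 : ℝ) π, ENNReal.ofReal (l ^ (-α) * h l)) ≤
        ENNReal.ofReal (C * (n : ℝ) ^ (κ / (1 - max α 0))) := by
  have hπ : (1:ℝ) < π := by linarith [Real.pi_gt_three]
  have hπ0 : (0:ℝ) < π := by linarith
  have h1ακ : 0 < 1 - α - κ := by linarith
  set β : ℝ := max α 0 with hβdef
  have hβ0 : 0 ≤ β := le_max_right _ _
  have hβ1 : β < 1 := max_lt (by linarith) one_pos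
  have h1β : 0 < 1 - β := by linarith
  set r : ℝ := κ / (1 - β) with hrdef
  set c : ℝ := 2 * π ^ |α| * 2 ^ |α| with hcdef
  have hcpos : 0 < c := by
    have := Real.rpow_pos_of_pos hπ0 |α|
    have := Real.rpow_pos_of_pos (show (0:ℝ) < 2 by norm_num) |α|
    positivity
  refine ⟨c / (1 - α - κ) + 1, by positivity, ?_⟩
  intro n h hmem
  obtain ⟨hbd, hint1, hint⟩ := hmem
  rcases Nat.eq_zero_or_pos n with hn0 | hn
  · exfalso
    have hzero : Set.EqOn h (fun _ => (0:ℝ)) (Set.Ioo (0:ℝ) π) := by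
      intro l hl
      have h2 := (hbd l hl).2
      rw [hn0] at h2
      simp only [Nat.cast_zero] at h2
      exact le_antisymm h2 (hbd l hl).1
    have : (∫ l in Set.Ioo (0:ℝ) π, h l) = 0 := by
      rw [setIntegral_congr_fun measurableSet_Ioo hzero]
      simp
    rw [hint1] at this
    norm_num at this
  -- now n ≥ 1
  set nR : ℝ := (n : ℝ) with hnRdef
  have hnR1 : 1 ≤ nR := by rw [hnRdef]; exact_mod_cast Nat.one_le_iff_ne_zero.2 hn.ne'
  have hnRpos : 0 < nR := by linarith
  set e : ℝ := -(1 / (1 - β)) with hedef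
  set δ : ℝ := nR ^ e with hδdef
  have hδpos : 0 < δ := Real.rpow_pos_of_pos hnRpos _
  have hδ1 : δ ≤ 1 := Real.rpow_le_one_of_one_le_of_nonpos hnR1 (by
    rw [hedef]; simp only [neg_nonpos]; positivity)
  have hδπ : δ < π := by linarith
  set δ0 : ℝ := 1 / (2 * nR) with hδ0def
  have hδ0pos : 0 < δ0 := by positivity
  have hδ0π : δ0 < π := by
    have : δ0 ≤ 1 / 2 := by
      rw [hδ0def]
      apply div_le_div_of_nonneg_left (by norm_num) (by norm_num)
      linarith
    linarith
  have hnRr_pos : 0 < nR ^ r := Real.rpow_pos_of_pos hnRpos _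
  -- bounds on h
  have hIooδ : Set.Ioo (0:ℝ) δ ⊆ Set.Ioo (0:ℝ) π := Set.Ioo_subset_Ioo le_rfl hδπ.le
  have hIcoδ : Set.Ico δ π ⊆ Set.Ioo (0:ℝ) π := fun x hx => ⟨lt_of_lt_of_le hδpos hx.1, hx.2⟩
  have hIooδ0 : Set.Ioo δ0 π ⊆ Set.Ioo (0:ℝ) π := Set.Ioo_subset_Ioo hδ0pos.le le_rfl
  have hIocδ0 : Set.Ioc (0:ℝ) δ0 ⊆ Set.Ioo (0:ℝ) π :=
    fun x hx => ⟨hx.1, lt_of_le_of_lt hx.2 hδ0π⟩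
  -- mass bound: at least 1/2 of the mass is in (δ0, π)
  have hmass : (1:ℝ)/2 ≤ ∫ l in Set.Ioo δ0 π, h l := by
    have hsplit : (∫ l in Set.Ioo (0:ℝ) π, h l)
        = (∫ l in Set.Ioc (0:ℝ) δ0, h l) + ∫ l in Set.Ioo δ0 π, h l := by
      rw [← Set.Ioc_union_Ioo_eq_Ioo hδ0pos.le hδ0π]
      exact setIntegral_union
        (by rw [Set.disjoint_left]; intro x hx hx'; exact absurd hx'.1 (not_lt.2 hx.2))
        measurableSet_Ioo
        (hint.mono_set hIocδ0) (hint.mono_set hIooδ0)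
    have hsmall : (∫ l in Set.Ioc (0:ℝ) δ0, h l) ≤ 1/2 := by
      have h1 : (∫ l in Set.Ioc (0:ℝ) δ0, h l) ≤ ∫ _ in Set.Ioc (0:ℝ) δ0, nR := by
        apply setIntegral_mono_on (hint.mono_set hIocδ0)
          (integrableOn_const (by rw [Real.volume_Ioc]; exact ENNReal.ofReal_ne_top))
          measurableSet_Ioc
        intro x hx
        exact (hbd x (hIocδ0 hx)).2
      have h2 : (∫ _ in Set.Ioc (0:ℝ) δ0, nR) = 1/2 := by
        rw [setIntegral_const, Real.volume_real_Ioc_of_le hδ0pos.le,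
          smul_eq_mul]
        rw [hδ0def]
        field_simp
        ring
      linarith
    rw [hint1] at hsplit
    linarith
  -- lower bound for λ^{-α} on (δ0, π)
  set m : ℝ := min ((2 * nR) ^ α) (π ^ (-α)) with hmdef
  have hmpos : 0 < m :=
    lt_min (Real.rpow_pos_of_pos (by linarith) _) (Real.rpow_pos_of_pos hπ0 _)
  have hml : ∀ l ∈ Set.Ioo δ0 π, m ≤ l ^ (-α) := by
    intro l hl
    rcases le_or_gt α 0 with hα0 | hα0
    · refine le_trans (min_le_left _ _) ?_
      have hδ0α : (2 * nR) ^ α = δ0 ^ (-α) := by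
        rw [hδ0def, one_div, Real.inv_rpow (by positivity), ← Real.rpow_neg (by positivity),
          neg_neg]
      rw [hδ0α]
      exact Real.rpow_le_rpow hδ0pos.le hl.1.le (by linarith)
    · refine le_trans (min_le_right _ _) ?_
      exact Real.rpow_le_rpow_of_nonpos (lt_trans hδ0pos hl.1) hl.2.le (by linarith)
  -- denominator lower bound
  set D : ℝ≥0∞ := ∫⁻ l in Set.Ioo (0:ℝ) π, ENNReal.ofReal (l ^ (-α) * h l) with hDdef
  have hae_nn : 0 ≤ᵐ[volume.restrict (Set.Ioo δ0 π)] h :=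
    ae_restrict_of_forall_mem measurableSet_Ioo (fun l hl => (hbd l (hIooδ0 hl)).1)
  have hDlb : ENNReal.ofReal (m * (1/2)) ≤ D := by
    have step1 : (∫⁻ l in Set.Ioo δ0 π, ENNReal.ofReal (m * h l)) ≤
        ∫⁻ l in Set.Ioo δ0 π, ENNReal.ofReal (l ^ (-α) * h l) := by
      apply lintegral_mono_ae
      apply ae_restrict_of_forall_mem measurableSet_Ioo
      intro l hl
      exact ENNReal.ofReal_le_ofReal
        (mul_le_mul_of_nonneg_right (hml l hl) (hbd l (hIooδ0 hl)).1)
    have step2 : (∫⁻ l in Set.Ioo δ0 π, ENNReal.ofReal (m * h l)) =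
        ENNReal.ofReal m * ∫⁻ l in Set.Ioo δ0 π, ENNReal.ofReal (h l) := by
      simp_rw [ENNReal.ofReal_mul hmpos.le]
      exact lintegral_const_mul' _ _ ENNReal.ofReal_ne_top
    have step3 : (∫⁻ l in Set.Ioo δ0 π, ENNReal.ofReal (h l)) =
        ENNReal.ofReal (∫ l in Set.Ioo δ0 π, h l) :=
      (ofReal_integral_eq_lintegral_ofReal (hint.mono_set hIooδ0) hae_nn).symm
    calc ENNReal.ofReal (m * (1/2))
        = ENNReal.ofReal m * ENNReal.ofReal (1/2) := ENNReal.ofReal_mul hmpos.le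
      _ ≤ ENNReal.ofReal m * ENNReal.ofReal (∫ l in Set.Ioo δ0 π, h l) := by
          exact mul_le_mul_right (ENNReal.ofReal_le_ofReal hmass) _
      _ = ∫⁻ l in Set.Ioo δ0 π, ENNReal.ofReal (m * h l) := by rw [step2, step3]
      _ ≤ ∫⁻ l in Set.Ioo δ0 π, ENNReal.ofReal (l ^ (-α) * h l) := step1
      _ ≤ D := lintegral_mono_set hIooδ0
  -- numerator split
  have hdisj : Disjoint (Set.Ioo (0:ℝ) δ) (Set.Ico δ π) := by
    rw [Set.disjoint_left]
    intro x hx hx'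
    exact absurd hx'.1 (not_le.2 hx.2)
  have hsplitN : (∫⁻ l in Set.Ioo (0:ℝ) π, ENNReal.ofReal (l ^ (-α - κ) * h l))
      = (∫⁻ l in Set.Ioo (0:ℝ) δ, ENNReal.ofReal (l ^ (-α - κ) * h l))
        + ∫⁻ l in Set.Ico δ π, ENNReal.ofReal (l ^ (-α - κ) * h l) := by
    rw [← Set.Ioo_union_Ico_eq_Ioo hδpos hδπ.le, lintegral_union measurableSet_Ico hdisj]
  -- bound for term A
  have hintrpow : IntegrableOn (fun l : ℝ => l ^ (-α - κ) * nR) (Set.Ioo (0:ℝ) δ) := by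
    have : IntervalIntegrable (fun x : ℝ => x ^ (-α - κ)) volume 0 δ :=
      intervalIntegral.intervalIntegrable_rpow' (by linarith)
    rw [intervalIntegrable_iff, Set.uIoc_of_le hδpos.le] at this
    exact (this.mono_set Set.Ioo_subset_Ioc_self).mul_const nR
  have hA : (∫⁻ l in Set.Ioo (0:ℝ) δ, ENNReal.ofReal (l ^ (-α - κ) * h l))
      ≤ ENNReal.ofReal ((δ ^ (1 - α - κ) / (1 - α - κ)) * nR) := by
    have step1 : (∫⁻ l in Set.Ioo (0:ℝ) δ, ENNReal.ofReal (l ^ (-α - κ) * h l))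
        ≤ ∫⁻ l in Set.Ioo (0:ℝ) δ, ENNReal.ofReal (l ^ (-α - κ) * nR) := by
      apply lintegral_mono_ae
      apply ae_restrict_of_forall_mem measurableSet_Ioo
      intro l hl
      exact ENNReal.ofReal_le_ofReal
        (mul_le_mul_of_nonneg_left (hbd l (hIooδ hl)).2
          (Real.rpow_nonneg hl.1.le _))
    have step2 : (∫⁻ l in Set.Ioo (0:ℝ) δ, ENNReal.ofReal (l ^ (-α - κ) * nR))
        = ENNReal.ofReal (∫ l in Set.Ioo (0:ℝ) δ, l ^ (-α - κ) * nR) := by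
      refine (ofReal_integral_eq_lintegral_ofReal hintrpow ?_).symm
      apply ae_restrict_of_forall_mem measurableSet_Ioo
      intro l hl
      exact mul_nonneg (Real.rpow_nonneg hl.1.le _) (by linarith)
    have step3 : (∫ l in Set.Ioo (0:ℝ) δ, l ^ (-α - κ) * nR)
        = (δ ^ (1 - α - κ) / (1 - α - κ)) * nR := by
      rw [integral_mul_const, ← integral_Ioc_eq_integral_Ioo,
        ← intervalIntegral.integral_of_le hδpos.le,
        integral_rpow (Or.inl (by linarith))]
      rw [Real.zero_rpow (by linarith : -α - κ + 1 ≠ 0)]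
      ring_nf
    rw [step3] at step2
    rw [step2] at step1
    exact step1
  -- bound for term B
  have hB : (∫⁻ l in Set.Ico δ π, ENNReal.ofReal (l ^ (-α - κ) * h l))
      ≤ ENNReal.ofReal (δ ^ (-κ)) * D := by
    have step1 : (∫⁻ l in Set.Ico δ π, ENNReal.ofReal (l ^ (-α - κ) * h l))
        ≤ ∫⁻ l in Set.Ico δ π, ENNReal.ofReal (δ ^ (-κ) * (l ^ (-α) * h l)) := by
      apply lintegral_mono_ae
      apply ae_restrict_of_forall_mem measurableSet_Ico
      intro l hl
      have hl0 : 0 < l := lt_of_lt_of_le hδpos hl.1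
      have hrw : l ^ (-α - κ) = l ^ (-κ) * l ^ (-α) := by
        rw [← Real.rpow_add hl0]; ring_nf
      have hpow : l ^ (-κ) ≤ δ ^ (-κ) :=
        Real.rpow_le_rpow_of_nonpos hδpos hl.1 (by linarith)
      apply ENNReal.ofReal_le_ofReal
      rw [hrw, mul_assoc]
      exact mul_le_mul_of_nonneg_right hpow
        (mul_nonneg (Real.rpow_nonneg hl0.le _) (hbd l (hIcoδ hl)).1)
    have step2 : (∫⁻ l in Set.Ico δ π, ENNReal.ofReal (δ ^ (-κ) * (l ^ (-α) * h l)))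
        = ENNReal.ofReal (δ ^ (-κ)) * ∫⁻ l in Set.Ico δ π, ENNReal.ofReal (l ^ (-α) * h l) := by
      simp_rw [ENNReal.ofReal_mul (Real.rpow_nonneg hδpos.le _)]
      exact lintegral_const_mul' _ _ ENNReal.ofReal_ne_top
    calc (∫⁻ l in Set.Ico δ π, ENNReal.ofReal (l ^ (-α - κ) * h l))
        ≤ ∫⁻ l in Set.Ico δ π, ENNReal.ofReal (δ ^ (-κ) * (l ^ (-α) * h l)) := step1
      _ = ENNReal.ofReal (δ ^ (-κ)) * ∫⁻ l in Set.Ico δ π, ENNReal.ofReal (l ^ (-α) * h l) :=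
          step2
      _ ≤ ENNReal.ofReal (δ ^ (-κ)) * D := mul_le_mul_right (lintegral_mono_set hIcoδ) _
  -- key exponent computations
  have key2 : δ ^ (-κ) = nR ^ r := by
    rw [hδdef, ← Real.rpow_mul hnRpos.le]
    congr 1
    rw [hedef, hrdef]
    field_simp
  have h1 : nR * δ ^ (1 - α - κ) = nR ^ r * nR ^ ((α - β) / (1 - β)) := by
    calc nR * δ ^ (1 - α - κ)
        = nR ^ (1:ℝ) * nR ^ (e * (1 - α - κ)) := by
          rw [Real.rpow_one, hδdef, ← Real.rpow_mul hnRpos.le]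
      _ = nR ^ (1 + e * (1 - α - κ)) := (Real.rpow_add hnRpos _ _).symm
      _ = nR ^ (r + (α - β) / (1 - β)) := by
          congr 1
          rw [hedef, hrdef]
          field_simp
          ring
      _ = nR ^ r * nR ^ ((α - β) / (1 - β)) := Real.rpow_add hnRpos _ _
  -- core real inequality
  set Q : ℝ := nR ^ ((α - β) / (1 - β)) with hQdef
  have hcore : 2 * Q ≤ c * m := by
    rcases le_or_gt 0 α with hα0 | hα0
    · -- α ≥ 0 : β = α, Q = 1, m ≥ π^{-α}
      have hβα : β = α := max_eq_left hα0
      have hQ1 : Q = 1 := by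
        rw [hQdef, hβα, sub_self, zero_div, Real.rpow_zero]
      have hm : π ^ (-α) ≤ m := by
        apply le_min _ le_rfl
        calc π ^ (-α) ≤ 1 := Real.rpow_le_one_of_one_le_of_nonpos hπ.le (by linarith)
          _ ≤ (2 * nR) ^ α := Real.one_le_rpow (by linarith) hα0
      have habs : |α| = α := abs_of_nonneg hα0
      have hππ : π ^ α * π ^ (-α) = 1 := by
        rw [← Real.rpow_add hπ0]; simp
      have h2α : (1:ℝ) ≤ 2 ^ α := Real.one_le_rpow (by norm_num) hα0
      have hπα : (0:ℝ) < π ^ α := Real.rpow_pos_of_pos hπ0 _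
      have h2αpos : (0:ℝ) < 2 ^ α := Real.rpow_pos_of_pos (by norm_num) _
      have hstep : 2 * (π ^ α * 2 ^ α) * π ^ (-α) ≤ 2 * (π ^ α * 2 ^ α) * m := by
        apply mul_le_mul_of_nonneg_left hm
        positivity
      have heq : 2 * (π ^ α * 2 ^ α) * π ^ (-α) = 2 * 2 ^ α := by
        calc 2 * (π ^ α * 2 ^ α) * π ^ (-α) = 2 * 2 ^ α * (π ^ α * π ^ (-α)) := by ring
          _ = 2 * 2 ^ α := by rw [hππ]; ring
      rw [hcdef, habs, hQ1]
      calc 2 * (1:ℝ) ≤ 2 * 2 ^ α := by linarith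
        _ = 2 * (π ^ α * 2 ^ α) * π ^ (-α) := heq.symm
        _ ≤ 2 * (π ^ α * 2 ^ α) * m := hstep
        _ = 2 * π ^ α * 2 ^ α * m := by ring
    · -- α < 0 : β = 0, Q = nR^α, m ≥ (2 nR)^α
      have hβα : β = 0 := max_eq_right hα0.le
      have hQ1 : Q = nR ^ α := by rw [hQdef, hβα]; norm_num
      have hm : (2 * nR) ^ α ≤ m := by
        apply le_min le_rfl
        calc (2 * nR) ^ α ≤ 1 :=
              Real.rpow_le_one_of_one_le_of_nonpos (by linarith) hα0.le
          _ ≤ π ^ (-α) := Real.one_le_rpow hπ.le (by linarith)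
      have habs : |α| = -α := abs_of_neg hα0
      have hmulrpow : (2 * nR) ^ α = 2 ^ α * nR ^ α :=
        Real.mul_rpow (by norm_num) hnRpos.le
      have h22 : (2:ℝ) ^ (-α) * 2 ^ α = 1 := by
        rw [← Real.rpow_add (by norm_num)]; simp
      have hπα : (1:ℝ) ≤ π ^ (-α) := Real.one_le_rpow hπ.le (by linarith)
      have hnRα : (0:ℝ) < nR ^ α := Real.rpow_pos_of_pos hnRpos _
      have h2ναpos : (0:ℝ) < 2 ^ (-α) := Real.rpow_pos_of_pos (by norm_num) _
      have hπναpos : (0:ℝ) < π ^ (-α) := Real.rpow_pos_of_pos hπ0 _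
      rw [hcdef, habs, hQ1]
      calc 2 * nR ^ α ≤ 2 * π ^ (-α) * nR ^ α := by nlinarith
        _ = 2 * π ^ (-α) * 2 ^ (-α) * (2 ^ α * nR ^ α) := by
            rw [show 2 * π ^ (-α) * 2 ^ (-α) * (2 ^ α * nR ^ α)
                = 2 * π ^ (-α) * (2 ^ (-α) * 2 ^ α) * nR ^ α by ring, h22]
            ring
        _ = 2 * π ^ (-α) * 2 ^ (-α) * (2 * nR) ^ α := by rw [hmulrpow]
        _ ≤ 2 * π ^ (-α) * 2 ^ (-α) * m := by
            apply mul_le_mul_of_nonneg_left hm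
            positivity
  -- key1 : the real inequality for term A
  have key1 : (δ ^ (1 - α - κ) / (1 - α - κ)) * nR
      ≤ (c / (1 - α - κ)) * nR ^ r * (m * (1/2)) := by
    have hlhs : (δ ^ (1 - α - κ) / (1 - α - κ)) * nR = (nR ^ r * Q) / (1 - α - κ) := by
      rw [← h1]; ring
    rw [hlhs]
    rw [show (c / (1 - α - κ)) * nR ^ r * (m * (1/2))
        = (nR ^ r * (c * m / 2)) / (1 - α - κ) by ring]
    exact (div_le_div_iff_of_pos_right h1ακ).2
      (mul_le_mul_of_nonneg_left (by linarith) hnRr_pos.le)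
  -- assemble
  apply ENNReal.div_le_of_le_mul
  rw [hsplitN]
  calc (∫⁻ l in Set.Ioo (0:ℝ) δ, ENNReal.ofReal (l ^ (-α - κ) * h l))
        + ∫⁻ l in Set.Ico δ π, ENNReal.ofReal (l ^ (-α - κ) * h l)
      ≤ ENNReal.ofReal ((δ ^ (1 - α - κ) / (1 - α - κ)) * nR)
        + ENNReal.ofReal (δ ^ (-κ)) * D := add_le_add hA hB
    _ ≤ ENNReal.ofReal ((c / (1 - α - κ)) * nR ^ r) * ENNReal.ofReal (m * (1/2))
        + ENNReal.ofReal (nR ^ r) * D := by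
        apply add_le_add
        · rw [← ENNReal.ofReal_mul (by positivity)]
          exact ENNReal.ofReal_le_ofReal key1
        · rw [key2]
    _ ≤ ENNReal.ofReal ((c / (1 - α - κ)) * nR ^ r) * D
        + ENNReal.ofReal (nR ^ r) * D := by
        exact add_le_add_left (mul_le_mul_right hDlb _) _
    _ = ENNReal.ofReal ((c / (1 - α - κ) + 1) * nR ^ r) * D := by
        rw [show (c / (1 - α - κ) + 1) * nR ^ r
            = (c / (1 - α - κ)) * nR ^ r + nR ^ r by ring,
          ENNReal.ofReal_add (by positivity) (by positivity), add_mul]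

end
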